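/- If a bounded graded poset P is totally semimodular (every interval of P is semimodular), then for every interval [x,y] of P, every ordering of the atoms of [x,y] is a recursive atom ordering. -/

import Mathlib

/-- Auxiliary fuelled version of the recursive atom ordering condition for the interval
`[x, y]` of a poset `P`.  The list of atoms is given as an injective enumeration
`a : Fin t → P` of the atoms of `[x, y]` (elements covering `x` and below `y`). -/
def RAOFuel {P : Type*} [PartialOrder P] : ℕ → P → P → (t : ℕ) → (Fin t → P) → Prop
  | 0, _, _, _, _ => False
  | (fuel + 1), x, y, t, a =>
      -- `a` enumerates the atoms of `[x,y]` without repetition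
      (∀ p : P, (∃ i, a i = p) ↔ (x ⋖ p ∧ p ≤ y)) ∧
      Function.Injective a ∧
      -- if the interval has length greater than 1:
      (¬ x ⋖ y →
        -- (i) each `[a j, y]` admits a recursive atom ordering in which the atoms covering
        -- some earlier `a i` come first
        (∀ j : Fin t, ∃ s : ℕ, ∃ b : Fin s → P,
           RAOFuel fuel (a j) y s b ∧
           ∃ m : ℕ, ∀ q : Fin s, ((∃ i : Fin t, i < j ∧ a i ⋖ b q) ↔ (q : ℕ) < m)) ∧
        -- (ii) for `i < j`, if `a i, a j < u` then some `z ≤ u` covers `a j` and an earlier atom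
        (∀ i j : Fin t, i < j → ∀ u : P, u ≤ y → a i < u → a j < u →
           ∃ k : Fin t, k < j ∧ ∃ z : P, z ≤ u ∧ a k ⋖ z ∧ a j ⋖ z))

/-- `a : Fin t → P` is a recursive atom ordering of the interval `[x, y]`. -/
def IsRAO {P : Type*} [PartialOrder P] (x y : P) (t : ℕ) (a : Fin t → P) : Prop :=
  ∃ fuel, RAOFuel fuel x y t a

private lemma rk_transGen_aux {P : Type*} [PartialOrder P] (rk : P → ℕ)
    (hrk : ∀ a b : P, a ⋖ b → rk b = rk a + 1) {x y : P}
    (h : Relation.TransGen (· ⋖ ·) x y) : rk x < rk y := by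
  induction h with
  | single hc => have := hrk _ _ hc; omega
  | tail _ hc ih => have := hrk _ _ hc; omega

private lemma rk_mono_aux {P : Type*} [PartialOrder P] [Fintype P] (rk : P → ℕ)
    (hrk : ∀ a b : P, a ⋖ b → rk b = rk a + 1) {x y : P} (h : x ≤ y) : rk x ≤ rk y := by
  classical
  rcases h.lt_or_eq with h | rfl
  · haveI : LocallyFiniteOrder P := Fintype.toLocallyFiniteOrder
    exact (rk_transGen_aux rk hrk (transGen_covBy_of_lt h)).le
  · exact le_rfl

private lemma rao_key {P : Type*} [PartialOrder P] [Fintype P]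
    (rk : P → ℕ) (hrk : ∀ a b : P, a ⋖ b → rk b = rk a + 1)
    (hsemi : ∀ b x u v : P, x ≤ b → u ≤ b → v ≤ b → u ≠ v → x ⋖ u → x ⋖ v →
       ∃ z : P, z ≤ b ∧ u ⋖ z ∧ v ⋖ z) :
    ∀ fuel : ℕ, ∀ x y : P, x ≤ y → rk y ≤ rk x + fuel →
      ∀ (t : ℕ) (a : Fin t → P), Function.Injective a →
      (∀ p : P, (∃ i, a i = p) ↔ (x ⋖ p ∧ p ≤ y)) →
      RAOFuel (fuel + 1) x y t a := by
  classical
  intro fuel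
  induction fuel with
  | zero =>
    intro x y hxy hr t a hinj henum
    refine ⟨henum, hinj, fun _ => ⟨?_, ?_⟩⟩
    · intro j
      exfalso
      have hj := (henum (a j)).mp ⟨j, rfl⟩
      have h1 : rk (a j) = rk x + 1 := hrk _ _ hj.1
      have h2 : rk (a j) ≤ rk y := rk_mono_aux rk hrk hj.2
      omega
    · intro i j hij u huy hiu hju
      have hi := (henum (a i)).mp ⟨i, rfl⟩
      have hj := (henum (a j)).mp ⟨j, rfl⟩
      have hne : a i ≠ a j := fun h => (Fin.ne_of_lt hij) (hinj h)
      obtain ⟨z, hzu, hiz, hjz⟩ :=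
        hsemi u x (a i) (a j) (hi.1.le.trans hiu.le) hiu.le hju.le hne hi.1 hj.1
      exact ⟨i, hij, z, hzu, hiz, hjz⟩
  | succ f ih =>
    intro x y hxy hr t a hinj henum
    refine ⟨henum, hinj, fun _ => ⟨?_, ?_⟩⟩
    · intro j
      have hj := (henum (a j)).mp ⟨j, rfl⟩
      -- build an enumeration of the atoms of `[a j, y]` with those covering
      -- earlier atoms first
      set Q : P → Prop := fun p => ∃ i : Fin t, i < j ∧ a i ⋖ p with hQ
      set S : Finset P := Finset.univ.filter (fun p => a j ⋖ p ∧ p ≤ y) with hS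
      set l1 : List P := (S.filter Q).toList with hl1
      set l2 : List P := (S.filter (fun p => ¬ Q p)).toList with hl2
      set l : List P := l1 ++ l2 with hl
      have hnd : l.Nodup := by
        refine List.Nodup.append (Finset.nodup_toList _) (Finset.nodup_toList _) ?_
        intro p hp1 hp2
        rw [hl1, Finset.mem_toList, Finset.mem_filter] at hp1
        rw [hl2, Finset.mem_toList, Finset.mem_filter] at hp2
        exact hp2.2 hp1.2
      refine ⟨l.length, fun q => l.get q, ?_, ?_⟩
      · -- recursive atom ordering of `[a j, y]`
        apply ih (a j) y hj.2
        · have h1 : rk (a j) = rk x + 1 := hrk _ _ hj.1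
          omega
        · exact List.nodup_iff_injective_get.mp hnd
        · intro p
          rw [← List.mem_iff_get]
          constructor
          · intro hp
            rcases List.mem_append.mp hp with h | h
            · have h' := Finset.mem_filter.mp (Finset.mem_toList.mp h)
              exact (Finset.mem_filter.mp h'.1).2
            · have h' := Finset.mem_filter.mp (Finset.mem_toList.mp h)
              exact (Finset.mem_filter.mp h'.1).2
          · intro hp
            have hpS : p ∈ S := Finset.mem_filter.mpr ⟨Finset.mem_univ _, hp⟩
            by_cases hq : Q p
            · exact List.mem_append.mpr
                (Or.inl (Finset.mem_toList.mpr (Finset.mem_filter.mpr ⟨hpS, hq⟩)))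
            · exact List.mem_append.mpr
                (Or.inr (Finset.mem_toList.mpr (Finset.mem_filter.mpr ⟨hpS, hq⟩)))
      · refine ⟨l1.length, ?_⟩
        intro q
        show (∃ i : Fin t, i < j ∧ a i ⋖ l.get q) ↔ (q : ℕ) < l1.length
        rcases lt_or_ge (q : ℕ) l1.length with hq | hq
        · simp only [iff_true_intro hq, iff_true]
          have hget : l.get q = l1.get ⟨q, hq⟩ := by
            show (l1 ++ l2)[(q : ℕ)] = l1[(q : ℕ)]
            exact List.getElem_append_left hq
          rw [hget]
          have hmem : l1.get ⟨q, hq⟩ ∈ l1 := List.get_mem _ _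
          exact (Finset.mem_filter.mp (Finset.mem_toList.mp hmem)).2
        · have hlt : (q : ℕ) - l1.length < l2.length := by
            have := q.isLt
            simp only [hl, List.length_append] at this
            omega
          have hget : l.get q = l2.get ⟨(q : ℕ) - l1.length, hlt⟩ := by
            show (l1 ++ l2)[(q : ℕ)] = l2[(q : ℕ) - l1.length]
            exact List.getElem_append_right hq
          rw [hget]
          have hmem : l2.get ⟨(q : ℕ) - l1.length, hlt⟩ ∈ l2 := List.get_mem _ _
          have hnq : ¬ Q (l2.get ⟨(q : ℕ) - l1.length, hlt⟩) :=
            (Finset.mem_filter.mp (Finset.mem_toList.mp hmem)).2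
          constructor
          · intro hQq; exact absurd hQq hnq
          · intro h; omega
    · intro i j hij u huy hiu hju
      have hi := (henum (a i)).mp ⟨i, rfl⟩
      have hj := (henum (a j)).mp ⟨j, rfl⟩
      have hne : a i ≠ a j := fun h => (Fin.ne_of_lt hij) (hinj h)
      obtain ⟨z, hzu, hiz, hjz⟩ :=
        hsemi u x (a i) (a j) (hi.1.le.trans hiu.le) hiu.le hju.le hne hi.1 hj.1
      exact ⟨i, hij, z, hzu, hiz, hjz⟩

/-- If a finite bounded graded poset `P` is totally semimodular (every interval is semimodular),
then for every interval `[x, y]` of `P`, every ordering of the atoms of `[x, y]` is a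
recursive atom ordering. -/
theorem totallySemimodular_every_atom_ordering_RAO
    {P : Type*} [PartialOrder P] [BoundedOrder P] [Fintype P]
    (rk : P → ℕ) (hrk : ∀ a b : P, a ⋖ b → rk b = rk a + 1)
    (hsemi : ∀ b x u v : P, x ≤ b → u ≤ b → v ≤ b → u ≠ v → x ⋖ u → x ⋖ v →
       ∃ z : P, z ≤ b ∧ u ⋖ z ∧ v ⋖ z) :
    ∀ x y : P, x ≤ y → ∀ (t : ℕ) (a : Fin t → P),
      Function.Injective a → (∀ p : P, (∃ i, a i = p) ↔ (x ⋖ p ∧ p ≤ y)) →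
      IsRAO x y t a := by
  intro x y hxy t a hinj henum
  exact ⟨rk y + 1, rao_key rk hrk hsemi (rk y) x y hxy (by omega) t a hinj henum⟩
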